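/- With the greedy park certificate strategy (parameters f, k, score sc = (2,1/2)-score), the kept collection 𝒫_i is always an FT-certificate of the collection 𝒫ᵃˡˡ_i of all sets presented so far: for every F ⊆ C with |F| ≤ f, if some P ∈ 𝒫ᵃˡˡ_i satisfies P ∩ F = ∅, then some P' ∈ 𝒫_i satisfies P' ∩ F = ∅. -/

import Mathlib

open Finset

/-- The `(α,β)`-score of a color set `P` relative to `J`:
`β (αf)^{-|P \ J|}` if `J ⊆ P`, else `0`. -/
noncomputable def sc {C : Type*} [DecidableEq C] (α β : ℝ) (f : ℕ) (J P : Finset C) : ℝ :=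
  if J ⊆ P then β * (α * (f : ℝ)) ^ (-(((P \ J).card : ℤ))) else 0

/-- The score of a collection: sum of scores of its members. -/
noncomputable def scSum {C : Type*} [DecidableEq C] (α β : ℝ) (f : ℕ)
    (J : Finset C) (Ps : Finset (Finset C)) : ℝ :=
  ∑ P ∈ Ps, sc α β f J P

/-- The `J`-link of a collection: members containing `J`. -/
def link {C : Type*} [DecidableEq C] (Ps : Finset (Finset C)) (J : Finset C) :
    Finset (Finset C) :=
  Ps.filter (fun P => J ⊆ P)

/-- A park: every relative score is at most `1`. -/
def IsPark {C : Type*} [DecidableEq C] (α β : ℝ) (f : ℕ) (Ps : Finset (Finset C)) : Prop :=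
  ∀ J : Finset C, scSum α β f J Ps ≤ 1

open scoped Classical

/-- The greedy park certificate strategy: starting from ∅, keep the i-th
presented set iff no sub-link of it is already full. -/
noncomputable def greedy {C : Type*} [DecidableEq C] (f : ℕ) (P : ℕ → Finset C) :
    ℕ → Finset (Finset C)
  | 0 => ∅
  | i + 1 =>
      if ∃ J ⊆ P (i + 1), 1 / 2 < scSum 2 (1 / 2) f J (greedy f P i) then
        greedy f P i
      else
        insert (P (i + 1)) (greedy f P i)

section Aux

variable {C : Type*} [DecidableEq C]

lemma sc_nonneg (f : ℕ) (hf : 0 < f) (J P : Finset C) : 0 ≤ sc 2 (1/2) f J P := by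
  unfold sc
  split
  · have h2f : (0:ℝ) < 2 * f := by positivity
    positivity
  · exact le_rfl

lemma sc_le_half (f : ℕ) (hf : 0 < f) (J P : Finset C) : sc 2 (1/2) f J P ≤ 1/2 := by
  unfold sc
  split
  · have h1 : (1:ℝ) ≤ 2 * f := by
      have : (1:ℝ) ≤ (f : ℝ) := by exact_mod_cast hf
      nlinarith
    have := zpow_le_one_of_nonpos₀ h1 (by omega : -(((P \ J).card : ℤ)) ≤ 0)
    nlinarith
  · norm_num

lemma scSum_nonneg (f : ℕ) (hf : 0 < f) (J : Finset C) (Ps : Finset (Finset C)) :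
    0 ≤ scSum 2 (1/2) f J Ps :=
  Finset.sum_nonneg fun P _ => sc_nonneg f hf J P

lemma sc_insert (f : ℕ) (hf : 0 < f) {J P : Finset C} {c : C}
    (hc : c ∈ P) (hcJ : c ∉ J) (hJP : J ⊆ P) :
    sc 2 (1/2) f J P = (1/(2*(f:ℝ))) * sc 2 (1/2) f (insert c J) P := by
  have hcPJ : c ∈ P \ J := Finset.mem_sdiff.mpr ⟨hc, hcJ⟩
  have hins : insert c J ⊆ P := Finset.insert_subset hc hJP
  have hsd : P \ insert c J = (P \ J).erase c := by
    ext x; simp [Finset.mem_sdiff, Finset.mem_erase, Finset.mem_insert]; tauto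
  have hcard : (P \ J).card = (P \ insert c J).card + 1 := by
    rw [hsd]
    have := Finset.card_erase_of_mem hcPJ
    have hpos : 1 ≤ (P \ J).card := Finset.card_pos.mpr ⟨c, hcPJ⟩
    omega
  unfold sc
  rw [if_pos hJP, if_pos hins, hcard]
  have h2f : (2 * (f:ℝ)) ≠ 0 := by positivity
  push_cast
  rw [neg_add, zpow_add₀ h2f]
  field_simp

lemma park_ft (f : ℕ) (hf : 0 < f) (Ps : Finset (Finset C))
    (hpark : ∀ J : Finset C, scSum 2 (1/2) f J Ps ≤ 1)
    (J F : Finset C) (hF : F.card ≤ f) (hJF : J ∩ F = ∅)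
    (hsc : 1/2 < scSum 2 (1/2) f J Ps) :
    ∃ Q ∈ Ps, J ⊆ Q ∧ Q ∩ F = ∅ := by
  by_contra hcon
  push_neg at hcon
  have key : ∀ P ∈ Ps, sc 2 (1/2) f J P ≤ ∑ c ∈ F, (1/(2*(f:ℝ))) * sc 2 (1/2) f (insert c J) P := by
    intro P hP
    by_cases hJP : J ⊆ P
    · have hne : P ∩ F ≠ ∅ := (hcon P hP hJP).ne_empty
      obtain ⟨c, hc⟩ := Finset.nonempty_iff_ne_empty.mpr hne
      rw [Finset.mem_inter] at hc
      have hcJ : c ∉ J := by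
        intro h
        have : c ∈ J ∩ F := Finset.mem_inter.mpr ⟨h, hc.2⟩
        rw [hJF] at this; exact absurd this (Finset.notMem_empty c)
      rw [sc_insert f hf hc.1 hcJ hJP]
      exact Finset.single_le_sum (f := fun c => (1/(2*(f:ℝ))) * sc 2 (1/2) f (insert c J) P)
        (fun d _ => by
          have := sc_nonneg f hf (insert d J) P
          positivity) hc.2
    · have h0 : sc 2 (1/2) f J P = 0 := by unfold sc; rw [if_neg hJP]
      rw [h0]
      exact Finset.sum_nonneg fun d _ => by
        have := sc_nonneg f hf (insert d J) P
        positivity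
  have hbound : scSum 2 (1/2) f J Ps ≤ ∑ c ∈ F, (1/(2*(f:ℝ))) * scSum 2 (1/2) f (insert c J) Ps := by
    unfold scSum
    calc ∑ P ∈ Ps, sc 2 (1/2) f J P
        ≤ ∑ P ∈ Ps, ∑ c ∈ F, (1/(2*(f:ℝ))) * sc 2 (1/2) f (insert c J) P :=
          Finset.sum_le_sum key
      _ = _ := by
          rw [Finset.sum_comm]
          simp [Finset.mul_sum]
  have hterm : ∀ c ∈ F, (1/(2*(f:ℝ))) * scSum 2 (1/2) f (insert c J) Ps ≤ 1/(2*(f:ℝ)) := by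
    intro c _
    have h1 := hpark (insert c J)
    have h0 : (0:ℝ) < 1/(2*(f:ℝ)) := by positivity
    nlinarith [scSum_nonneg f hf (insert c J) Ps]
  have hsum : ∑ c ∈ F, (1/(2*(f:ℝ))) * scSum 2 (1/2) f (insert c J) Ps ≤ F.card * (1/(2*(f:ℝ))) := by
    calc _ ≤ ∑ _c ∈ F, 1/(2*(f:ℝ)) := Finset.sum_le_sum hterm
      _ = F.card * (1/(2*(f:ℝ))) := by rw [Finset.sum_const, nsmul_eq_mul]
  have hfin : (F.card : ℝ) * (1/(2*(f:ℝ))) ≤ 1/2 := by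
    have hFf : (F.card : ℝ) ≤ (f : ℝ) := by exact_mod_cast hF
    have hfpos : (0:ℝ) < f := by exact_mod_cast hf
    have : (F.card : ℝ) * (1/(2*(f:ℝ))) ≤ (f:ℝ) * (1/(2*(f:ℝ))) := by
      apply mul_le_mul_of_nonneg_right hFf (by positivity)
    calc (F.card : ℝ) * (1/(2*(f:ℝ))) ≤ (f:ℝ) * (1/(2*(f:ℝ))) := this
      _ = 1/2 := by field_simp
  linarith

lemma greedy_park (f : ℕ) (hf : 0 < f) (P : ℕ → Finset C) :
    ∀ i (J : Finset C), scSum 2 (1/2) f J (greedy f P i) ≤ 1 := by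
  intro i
  induction i with
  | zero => intro J; simp [greedy, scSum]
  | succ i ih =>
    intro J
    rw [greedy]
    split
    · exact ih J
    · next h =>
      push_neg at h
      by_cases hmem : P (i+1) ∈ greedy f P i
      · rw [Finset.insert_eq_self.mpr hmem]; exact ih J
      · unfold scSum
        rw [Finset.sum_insert hmem]
        by_cases hJ : J ⊆ P (i+1)
        · have h1 := h J hJ
          have h2 := sc_le_half f hf J (P (i+1))
          unfold scSum at h1
          linarith
        · have h0 : sc 2 (1/2) f J (P (i+1)) = 0 := by unfold sc; rw [if_neg hJ]
          rw [h0, zero_add]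
          exact ih J

lemma greedy_mono (f : ℕ) (P : ℕ → Finset C) (i : ℕ) :
    greedy f P i ⊆ greedy f P (i+1) := by
  by_cases h : ∃ J ⊆ P (i + 1), 1 / 2 < scSum 2 (1 / 2) f J (greedy f P i)
  · rw [greedy, if_pos h]
  · rw [greedy, if_neg h]
    exact Finset.subset_insert _ _

end Aux

/-- The greedy strategy maintains an FT-certificate of all sets presented so far. -/
theorem greedy_certificate {C : Type*} [DecidableEq C] (f k : ℕ) (hf : 0 < f)
    (P : ℕ → Finset C) (hk : ∀ i, (P i).card ≤ k) (i : ℕ)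
    (F : Finset C) (hF : F.card ≤ f)
    (hex : ∃ j, 1 ≤ j ∧ j ≤ i ∧ P j ∩ F = ∅) :
    ∃ Q ∈ greedy f P i, Q ∩ F = ∅ := by
  induction i with
  | zero =>
    obtain ⟨j, h1, h2, _⟩ := hex
    omega
  | succ i ih =>
    obtain ⟨j, h1, h2, h3⟩ := hex
    rcases Nat.lt_or_ge j (i+1) with hj | hj
    · obtain ⟨Q, hQ, hQF⟩ := ih ⟨j, h1, by omega, h3⟩
      exact ⟨Q, greedy_mono f P i hQ, hQF⟩
    · have hji : j = i + 1 := by omega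
      subst hji
      rw [greedy]
      by_cases h : ∃ J ⊆ P (i + 1), 1 / 2 < scSum 2 (1 / 2) f J (greedy f P i)
      · rw [if_pos h]
        obtain ⟨J, hJsub, hJsc⟩ := h
        have hJF : J ∩ F = ∅ := by
          rw [← Finset.subset_empty, ← h3]
          exact Finset.inter_subset_inter hJsub (Finset.Subset.refl F)
        obtain ⟨Q, hQ, _, hQF⟩ := park_ft f hf (greedy f P i)
          (greedy_park f hf P i) J F hF hJF hJsc
        exact ⟨Q, hQ, hQF⟩
      · rw [if_neg h]
        exact ⟨P (i+1), Finset.mem_insert_self _ _, h3⟩
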